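/- arXiv:1404.6112 — 3 statements merged into one kernel-verified Lean document; each statement's English description precedes it below -/
import Mathlib

section
/- (Theorem: union of stability regions) Fix channel success probabilities f_pd, f_ps, f_sd ∈ (0,1) with f_pd < f_sd. For p_q ∈ (0,1) and p_a ∈ (0,1], let R(p_q,p_a) = { (λ_p, λ_s) ∈ ℝ² : 0 < λ_p < Λ_p(p_q,p_a) and 0 < λ_s < Λ_s(λ_p,p_q,p_a) }. Then the union of R(p_q,p_a) over all p_q ∈ (0,1) and p_a ∈ (0,1] equals { (λ_p, λ_s) ∈ ℝ² : λ_p > 0, λ_s > 0, and λ_s < f_sd − ((f_sd + f_ps·(1−f_pd))/(f_pd + f_ps·(1−f_pd)))·λ_p }. -/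
/-- Service rate of the primary queue μ_p(p_a). -/
def primaryServiceRate (f_pd f_ps p_a : ℝ) : ℝ :=
  f_pd + p_a * f_ps * (1 - f_pd)

/-- Maximum achievable primary arrival rate Λ_p(p_q, p_a). -/
noncomputable def maxPrimaryRate (f_pd f_ps f_sd p_q p_a : ℝ) : ℝ :=
  f_sd * (1 - p_q) * primaryServiceRate f_pd f_ps p_a /
    (f_sd * (1 - p_q) + p_a * f_ps * (1 - f_pd))

/-- Maximum achievable secondary arrival rate Λ_s(λ_p, p_q, p_a). -/
noncomputable def maxSecondaryRate (f_pd f_ps f_sd lp p_q p_a : ℝ) : ℝ :=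
  p_q * f_sd * (1 - lp / primaryServiceRate f_pd f_ps p_a)

/-- Stability region for a fixed pair (p_q, p_a). -/
noncomputable def stabilityRegion (f_pd f_ps f_sd p_q p_a : ℝ) : Set (ℝ × ℝ) :=
  {l : ℝ × ℝ | 0 < l.1 ∧ l.1 < maxPrimaryRate f_pd f_ps f_sd p_q p_a ∧
    0 < l.2 ∧ l.2 < maxSecondaryRate f_pd f_ps f_sd l.1 p_q p_a}

set_option maxHeartbeats 2000000

/-- The union of the stability regions over all (p_q, p_a) ∈ (0,1) × (0,1] equals
the stability region of any work-conserving cooperative scheme. -/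
theorem union_stability_regions (f_pd f_ps f_sd : ℝ)
    (hpd : f_pd ∈ Set.Ioo (0 : ℝ) 1) (hps : f_ps ∈ Set.Ioo (0 : ℝ) 1)
    (hsd : f_sd ∈ Set.Ioo (0 : ℝ) 1) (hlt : f_pd < f_sd) :
    (⋃ p_q ∈ Set.Ioo (0 : ℝ) 1, ⋃ p_a ∈ Set.Ioc (0 : ℝ) 1,
        stabilityRegion f_pd f_ps f_sd p_q p_a)
      = {l : ℝ × ℝ | 0 < l.1 ∧ 0 < l.2 ∧
          l.2 < f_sd - (f_sd + f_ps * (1 - f_pd)) / (f_pd + f_ps * (1 - f_pd)) * l.1} := by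
  obtain ⟨hpd0, hpd1⟩ := hpd
  obtain ⟨hps0, hps1⟩ := hps
  obtain ⟨hsd0, hsd1⟩ := hsd
  have ha : 0 < f_ps * (1 - f_pd) := mul_pos hps0 (by linarith)
  have hμ1 : 0 < f_pd + f_ps * (1 - f_pd) := by linarith
  ext ⟨x, y⟩
  simp only [Set.mem_iUnion, Set.mem_setOf_eq, stabilityRegion, maxPrimaryRate,
    maxSecondaryRate, primaryServiceRate, Set.mem_Ioo, Set.mem_Ioc]
  constructor
  · rintro ⟨q, ⟨hq0, hq1⟩, p, ⟨hp0, hp1⟩, hx0, hx2, hy0, hy2⟩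
    refine ⟨hx0, hy0, ?_⟩
    have hpa : 0 < p * f_ps * (1 - f_pd) := by nlinarith
    have hμ : 0 < f_pd + p * f_ps * (1 - f_pd) := by linarith
    have hD : 0 < f_sd * (1 - q) + p * f_ps * (1 - f_pd) := by nlinarith
    have h1 : x * (f_sd * (1 - q) + p * f_ps * (1 - f_pd)) <
        f_sd * (1 - q) * (f_pd + p * f_ps * (1 - f_pd)) := (lt_div_iff₀ hD).mp hx2
    have h2 : y * (f_pd + p * f_ps * (1 - f_pd)) <
        q * f_sd * ((f_pd + p * f_ps * (1 - f_pd)) - x) := by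
      have h := mul_lt_mul_of_pos_right hy2 hμ
      calc y * (f_pd + p * f_ps * (1 - f_pd))
          < q * f_sd * (1 - x / (f_pd + p * f_ps * (1 - f_pd))) *
              (f_pd + p * f_ps * (1 - f_pd)) := h
        _ = q * f_sd * ((f_pd + p * f_ps * (1 - f_pd)) - x) := by
            field_simp
    rw [show f_sd - (f_sd + f_ps * (1 - f_pd)) / (f_pd + f_ps * (1 - f_pd)) * x
        = (f_sd * (f_pd + f_ps * (1 - f_pd)) - (f_sd + f_ps * (1 - f_pd)) * x) /
          (f_pd + f_ps * (1 - f_pd)) from by field_simp, lt_div_iff₀ hμ1]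
    have key : 0 ≤ f_sd * (f_pd + p * f_ps * (1 - f_pd)) * (f_pd + f_ps * (1 - f_pd))
          * (1 - q) + x * (q * f_sd * (f_pd + f_ps * (1 - f_pd)) -
            (f_sd + f_ps * (1 - f_pd)) * (f_pd + p * f_ps * (1 - f_pd))) := by
      rcases le_or_gt 0 (q * f_sd * (f_pd + f_ps * (1 - f_pd)) -
          (f_sd + f_ps * (1 - f_pd)) * (f_pd + p * f_ps * (1 - f_pd))) with hc | hc
      · have h4 := mul_nonneg hx0.le hc
        nlinarith [mul_pos (mul_pos (mul_pos hsd0 hμ) hμ1) (by linarith : (0:ℝ) < 1 - q)]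
      · have h3 := mul_lt_mul_of_neg_right h1 hc
        have hid : (f_pd + f_ps * (1 - f_pd)) * (f_sd * (1 - q) + p * f_ps * (1 - f_pd))
            + (q * f_sd * (f_pd + f_ps * (1 - f_pd)) -
              (f_sd + f_ps * (1 - f_pd)) * (f_pd + p * f_ps * (1 - f_pd)))
            = f_ps * (1 - f_pd) * (1 - p) * (f_sd - f_pd) := by ring
        have hpos : 0 ≤ f_sd * (1 - q) * (f_pd + p * f_ps * (1 - f_pd)) *
            (f_ps * (1 - f_pd) * (1 - p) * (f_sd - f_pd)) := by
          apply mul_nonneg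
          · have h5 : (0:ℝ) < 1 - q := by linarith
            positivity
          · have h6 : (0:ℝ) ≤ 1 - p := by linarith
            have h7 : (0:ℝ) ≤ f_sd - f_pd := by linarith
            positivity
        have hprod : 0 < (x * (f_sd * (1 - q) + p * f_ps * (1 - f_pd)) -
            f_sd * (1 - q) * (f_pd + p * f_ps * (1 - f_pd))) *
            (q * f_sd * (f_pd + f_ps * (1 - f_pd)) -
              (f_sd + f_ps * (1 - f_pd)) * (f_pd + p * f_ps * (1 - f_pd))) :=
          mul_pos_of_neg_of_neg (by linarith) hc
        have hmain : 0 < (f_sd * (1 - q) + p * f_ps * (1 - f_pd)) *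
            (f_sd * (f_pd + p * f_ps * (1 - f_pd)) * (f_pd + f_ps * (1 - f_pd)) * (1 - q)
              + x * (q * f_sd * (f_pd + f_ps * (1 - f_pd)) -
                (f_sd + f_ps * (1 - f_pd)) * (f_pd + p * f_ps * (1 - f_pd)))) := by
          have heq : (f_sd * (1 - q) + p * f_ps * (1 - f_pd)) *
              (f_sd * (f_pd + p * f_ps * (1 - f_pd)) * (f_pd + f_ps * (1 - f_pd)) * (1 - q)
                + x * (q * f_sd * (f_pd + f_ps * (1 - f_pd)) -
                  (f_sd + f_ps * (1 - f_pd)) * (f_pd + p * f_ps * (1 - f_pd))))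
              = f_sd * (1 - q) * (f_pd + p * f_ps * (1 - f_pd)) *
                  (f_ps * (1 - f_pd) * (1 - p) * (f_sd - f_pd)) +
                (x * (f_sd * (1 - q) + p * f_ps * (1 - f_pd)) -
                  f_sd * (1 - q) * (f_pd + p * f_ps * (1 - f_pd))) *
                (q * f_sd * (f_pd + f_ps * (1 - f_pd)) -
                  (f_sd + f_ps * (1 - f_pd)) * (f_pd + p * f_ps * (1 - f_pd))) := by ring
          rw [heq]
          linarith [hpos, hprod]
        have := div_pos hmain hD
        rw [mul_div_cancel_left₀ _ hD.ne'] at this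
        exact this.le
    rw [← mul_lt_mul_iff_of_pos_right hμ]
    have h2' := mul_lt_mul_of_pos_right h2 hμ1
    nlinarith [h2', key]
  · rintro ⟨hx0, hy0, hlin⟩
    have hlin' : y * (f_pd + f_ps * (1 - f_pd)) <
        f_sd * (f_pd + f_ps * (1 - f_pd)) - (f_sd + f_ps * (1 - f_pd)) * x := by
      rw [show f_sd - (f_sd + f_ps * (1 - f_pd)) / (f_pd + f_ps * (1 - f_pd)) * x
          = (f_sd * (f_pd + f_ps * (1 - f_pd)) - (f_sd + f_ps * (1 - f_pd)) * x) /
            (f_pd + f_ps * (1 - f_pd)) from by field_simp, lt_div_iff₀ hμ1] at hlin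
      exact hlin
    have hsa : (0:ℝ) < f_sd + f_ps * (1 - f_pd) := by linarith
    have hxμ : x < f_pd + f_ps * (1 - f_pd) := by
      nlinarith [mul_pos hy0 hμ1, mul_pos ha hμ1, hsa, hlin']
    set E : ℝ := f_sd * ((f_pd + f_ps * (1 - f_pd)) - x) with hE_def
    have hE : 0 < E := mul_pos hsd0 (by linarith)
    clear_value E
    have hkey : y * (f_pd + f_ps * (1 - f_pd)) < E - x * (f_ps * (1 - f_pd)) := by
      rw [hE_def]; linarith [hlin']
    set q : ℝ := (y * (f_pd + f_ps * (1 - f_pd)) + E - x * (f_ps * (1 - f_pd))) / (2 * E)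
      with hq_def
    clear_value q
    have h2E : (0:ℝ) < 2 * E := by linarith
    have hqE : q * (2 * E) = y * (f_pd + f_ps * (1 - f_pd)) + E - x * (f_ps * (1 - f_pd)) := by
      rw [hq_def, div_mul_cancel₀ _ (ne_of_gt h2E)]
    have hq0 : 0 < q := by
      rw [hq_def]
      apply div_pos _ h2E
      linarith [hkey, mul_pos hy0 hμ1]
    have hq1 : q < 1 := by
      rw [hq_def, div_lt_one h2E]
      linarith [hkey, mul_pos hx0 ha]
    have hA : x * (f_ps * (1 - f_pd)) < (1 - q) * E := by linarith [hqE, hkey]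
    have hB : y * (f_pd + f_ps * (1 - f_pd)) < q * E := by linarith [hqE, hkey]
    refine ⟨q, ⟨hq0, hq1⟩, 1, ⟨one_pos, le_refl 1⟩, hx0, ?_, hy0, ?_⟩
    · rw [lt_div_iff₀ (by nlinarith [mul_pos hsd0 (by linarith : (0:ℝ) < 1 - q)] :
        (0:ℝ) < f_sd * (1 - q) + 1 * f_ps * (1 - f_pd))]
      rw [hE_def] at hA
      nlinarith [hA]
    · rw [show q * f_sd * (1 - x / (f_pd + 1 * f_ps * (1 - f_pd)))
          = q * (f_sd * ((f_pd + f_ps * (1 - f_pd)) - x)) / (f_pd + f_ps * (1 - f_pd)) from by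
        rw [one_mul]; field_simp, lt_div_iff₀ hμ1]
      rw [hE_def] at hB
      nlinarith [hB]
end

section
/- (Outer bound on the stability region) Fix channel success probabilities f_pd, f_ps, f_sd ∈ (0,1) with f_pd < f_sd, p_q ∈ (0,1), p_a ∈ (0,1], and a primary arrival rate λ_p with 0 < λ_p < Λ_p(p_q,p_a). Then the maximum achievable secondary arrival rate satisfies Λ_s(λ_p,p_q,p_a) < f_sd − ((f_sd + f_ps·(1−f_pd))/(f_pd + f_ps·(1−f_pd)))·λ_p. -/
/-- Outer bound on the stability region. -/
theorem outer_bound_stability (f_pd f_ps f_sd p_q p_a lp : ℝ)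
    (hpd : f_pd ∈ Set.Ioo (0 : ℝ) 1) (hps : f_ps ∈ Set.Ioo (0 : ℝ) 1)
    (hsd : f_sd ∈ Set.Ioo (0 : ℝ) 1) (hlt : f_pd < f_sd)
    (hq : p_q ∈ Set.Ioo (0 : ℝ) 1) (ha : p_a ∈ Set.Ioc (0 : ℝ) 1)
    (hlp0 : 0 < lp) (hlp : lp < maxPrimaryRate f_pd f_ps f_sd p_q p_a) :
    maxSecondaryRate f_pd f_ps f_sd lp p_q p_a
      < f_sd - (f_sd + f_ps * (1 - f_pd)) / (f_pd + f_ps * (1 - f_pd)) * lp := by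
  obtain ⟨hpd0, hpd1⟩ := hpd
  obtain ⟨hps0, hps1⟩ := hps
  obtain ⟨hsd0, hsd1⟩ := hsd
  obtain ⟨hq0, hq1⟩ := hq
  obtain ⟨ha0, ha1⟩ := ha
  have haa : 0 < f_ps * (1 - f_pd) := by nlinarith
  have hμ : 0 < primaryServiceRate f_pd f_ps p_a := by
    unfold primaryServiceRate; nlinarith
  have hden : 0 < f_sd * (1 - p_q) + p_a * f_ps * (1 - f_pd) := by nlinarith
  have hd2 : 0 < f_pd + f_ps * (1 - f_pd) := by nlinarith
  unfold maxPrimaryRate at hlp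
  rw [lt_div_iff₀ hden] at hlp
  unfold maxSecondaryRate
  rw [show (1 : ℝ) - lp / primaryServiceRate f_pd f_ps p_a
      = (primaryServiceRate f_pd f_ps p_a - lp) / primaryServiceRate f_pd f_ps p_a by
    field_simp]
  rw [mul_div_assoc', div_lt_iff₀ hμ,
    show f_sd - (f_sd + f_ps * (1 - f_pd)) / (f_pd + f_ps * (1 - f_pd)) * lp
      = (f_sd * (f_pd + f_ps * (1 - f_pd)) - (f_sd + f_ps * (1 - f_pd)) * lp) /
        (f_pd + f_ps * (1 - f_pd)) by field_simp,
    div_mul_eq_mul_div, lt_div_iff₀ hd2]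
  unfold primaryServiceRate at *
  nlinarith [mul_pos hq0 hsd0, mul_nonneg (mul_nonneg haa.le (sub_nonneg.2 ha1))
      (sub_pos.2 hlt).le, mul_pos hlp0 hden, mul_pos hμ hd2,
    mul_lt_mul_of_pos_right hlp hd2, mul_nonneg hlp0.le (mul_nonneg (mul_nonneg haa.le (sub_nonneg.2 ha1)) (sub_pos.2 hlt).le)]
end

section
/- (Feasible set characterization) Fix channel success probabilities f_pd, f_ps, f_sd ∈ (0,1), an admission probability p_a ∈ (0,1], and arrival rates λ_p, λ_s with λ_s > 0 and 0 < λ_p < μ_p(p_a). Define p_q^l = λ_s·μ_p(p_a)/(f_sd·(μ_p(p_a) − λ_p)) and p_q^u = 1 − λ_p·p_a·f_ps·(1−f_pd)/(f_sd·(μ_p(p_a) − λ_p)). Then for every p_q ∈ (0,1): the two stability conditions λ_p < Λ_p(p_q,p_a) and λ_s < Λ_s(λ_p,p_q,p_a) both hold if and only if p_q^l < p_q < p_q^u. -/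
/-- Feasible set characterization: the two stability conditions hold iff
p_q lies strictly between the lower and upper feasibility bounds. -/
theorem feasible_set_characterization (f_pd f_ps f_sd p_a lp ls : ℝ)
    (hpd : f_pd ∈ Set.Ioo (0 : ℝ) 1) (hps : f_ps ∈ Set.Ioo (0 : ℝ) 1)
    (hsd : f_sd ∈ Set.Ioo (0 : ℝ) 1) (ha : p_a ∈ Set.Ioc (0 : ℝ) 1)
    (hls : 0 < ls) (hlp0 : 0 < lp) (hlp : lp < primaryServiceRate f_pd f_ps p_a) :
    ∀ p_q ∈ Set.Ioo (0 : ℝ) 1,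
      (lp < maxPrimaryRate f_pd f_ps f_sd p_q p_a ∧
        ls < maxSecondaryRate f_pd f_ps f_sd lp p_q p_a)
      ↔ (ls * primaryServiceRate f_pd f_ps p_a /
            (f_sd * (primaryServiceRate f_pd f_ps p_a - lp)) < p_q ∧
          p_q < 1 - lp * p_a * f_ps * (1 - f_pd) /
            (f_sd * (primaryServiceRate f_pd f_ps p_a - lp))) := by
  obtain ⟨hpd0, hpd1⟩ := hpd
  obtain ⟨hps0, hps1⟩ := hps
  obtain ⟨hsd0, hsd1⟩ := hsd
  obtain ⟨ha0, ha1⟩ := ha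
  intro pq ⟨hq0, hq1⟩
  set μ := primaryServiceRate f_pd f_ps p_a with hμ
  have hc : 0 < p_a * f_ps * (1 - f_pd) := mul_pos (mul_pos ha0 hps0) (by linarith)
  have hμ0 : 0 < μ := by
    rw [hμ]; unfold primaryServiceRate; nlinarith
  have hD : 0 < f_sd * (μ - lp) := by nlinarith
  have hB : 0 < f_sd * (1 - pq) + p_a * f_ps * (1 - f_pd) := by nlinarith
  constructor
  · rintro ⟨h1, h2⟩
    rw [maxPrimaryRate, lt_div_iff₀ hB] at h1
    rw [maxSecondaryRate] at h2
    constructor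
    · rw [div_lt_iff₀ hD]
      have : 1 - lp / μ = (μ - lp) / μ := by field_simp
      rw [this] at h2
      have h2'' : ls < pq * f_sd * (μ - lp) / μ := by
        calc ls < pq * f_sd * ((μ - lp) / μ) := h2
          _ = pq * f_sd * (μ - lp) / μ := by ring
      have h2' : ls * μ < pq * f_sd * (μ - lp) := (lt_div_iff₀ hμ0).mp h2''
      nlinarith
    · have key : lp * p_a * f_ps * (1 - f_pd) / (f_sd * (μ - lp)) < 1 - pq := by
        rw [div_lt_iff₀ hD]; nlinarith
      linarith
  · rintro ⟨h1, h2⟩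
    rw [div_lt_iff₀ hD] at h1
    have h2' : lp * p_a * f_ps * (1 - f_pd) < (1 - pq) * (f_sd * (μ - lp)) := by
      rw [← div_lt_iff₀ hD]; linarith
    constructor
    · rw [maxPrimaryRate, lt_div_iff₀ hB]
      nlinarith
    · rw [maxSecondaryRate]
      have : 1 - lp / μ = (μ - lp) / μ := by field_simp
      rw [this]
      rw [show pq * f_sd * ((μ - lp) / μ) = pq * f_sd * (μ - lp) / μ by ring,
        lt_div_iff₀ hμ0]
      nlinarith
end
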